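/- Let H = X⊗I₂⊗X + I₂⊗X⊗X, let ρ₀ = ½|011⟩⟨011| + ½|100⟩⟨100|, and let ρ_τ = exp(−(iπ/4)H) ρ₀ exp((iπ/4)H). Define the two-qubit vectors χ± = ½(|00⟩ + |11⟩ ± |01⟩ ∓ |10⟩) and the single-qubit vectors |y±⟩ = (|0⟩ ± i|1⟩)/√2. Then ρ_τ = ½ |χ₊⟩⟨χ₊| ⊗ |y₊⟩⟨y₊| + ½ |χ₋⟩⟨χ₋| ⊗ |y₋⟩⟨y₋|. In particular, ρ_τ is classically correlated as measured on C (zero discord D_{AB|C} at time τ = π/4): the von Neumann measurement on C in the orthonormal basis {|y₊⟩, |y₋⟩} leaves ρ_τ unchanged. -/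

import Mathlib

/-!
STATEMENT 3: With `H = X⊗I₂⊗X + I₂⊗X⊗X`, `ρ₀ = ½|011⟩⟨011| + ½|100⟩⟨100|` and
`ρ_τ = exp(−(iπ/4)H) ρ₀ exp((iπ/4)H)`, one has
`ρ_τ = ½|χ₊⟩⟨χ₊|⊗|y₊⟩⟨y₊| + ½|χ₋⟩⟨χ₋|⊗|y₋⟩⟨y₋|`, and the von Neumann measurement
on C in the orthonormal basis `{|y₊⟩, |y₋⟩}` leaves `ρ_τ` unchanged (zero discord
`D_{AB|C}` at `τ = π/4`).
-/

open Matrix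
open scoped Kronecker

noncomputable section

/-- The Pauli-x matrix. -/
def X : Matrix (Fin 2) (Fin 2) ℂ := !![0, 1; 1, 0]

/-- The 2×2 identity matrix. -/
def Id2 : Matrix (Fin 2) (Fin 2) ℂ := 1

/-- `H = X⊗I₂⊗X + I₂⊗X⊗X` (tensor factors ordered A, B, C). -/
def HH : Matrix (Fin 2 × Fin 2 × Fin 2) (Fin 2 × Fin 2 × Fin 2) ℂ :=
  X ⊗ₖ (Id2 ⊗ₖ X) + Id2 ⊗ₖ (X ⊗ₖ X)

/-- Standard basis vector `|0⟩` of ℂ². -/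
def ket0 : Fin 2 → ℂ := ![1, 0]

/-- Standard basis vector `|1⟩` of ℂ². -/
def ket1 : Fin 2 → ℂ := ![0, 1]

/-- `|ab⟩ = |a⟩⊗|b⟩ ∈ ℂ⁴` (Kronecker product of vectors). -/
def kron2 (u v : Fin 2 → ℂ) : Fin 2 × Fin 2 → ℂ := fun p => u p.1 * v p.2

/-- `|abc⟩ = |a⟩⊗|b⟩⊗|c⟩ ∈ ℂ⁸` (Kronecker product of vectors). -/
def kron3 (u v w : Fin 2 → ℂ) : Fin 2 × Fin 2 × Fin 2 → ℂ :=
  fun p => u p.1 * v p.2.1 * w p.2.2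

/-- The outer product (projector) `|v⟩⟨v|`. -/
def outer {n : Type*} (v : n → ℂ) : Matrix n n ℂ := vecMulVec v (star v)

/-- Tensor product of a two-qubit (AB) vector with a one-qubit (C) vector. -/
def joinABC (w : Fin 2 × Fin 2 → ℂ) (v : Fin 2 → ℂ) : Fin 2 × Fin 2 × Fin 2 → ℂ :=
  fun p => w (p.1, p.2.1) * v p.2.2

/-- `χ₊ = ½(|00⟩ + |11⟩ + |01⟩ − |10⟩)`. -/
def chiPlus : Fin 2 × Fin 2 → ℂ :=
  (1 / 2 : ℂ) • (kron2 ket0 ket0 + kron2 ket1 ket1 + kron2 ket0 ket1 - kron2 ket1 ket0)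

/-- `χ₋ = ½(|00⟩ + |11⟩ − |01⟩ + |10⟩)`. -/
def chiMinus : Fin 2 × Fin 2 → ℂ :=
  (1 / 2 : ℂ) • (kron2 ket0 ket0 + kron2 ket1 ket1 - kron2 ket0 ket1 + kron2 ket1 ket0)

/-- `|y₊⟩ = (|0⟩ + i|1⟩)/√2`. -/
def yPlus : Fin 2 → ℂ := ((Real.sqrt 2 : ℂ))⁻¹ • (ket0 + Complex.I • ket1)

/-- `|y₋⟩ = (|0⟩ − i|1⟩)/√2`. -/
def yMinus : Fin 2 → ℂ := ((Real.sqrt 2 : ℂ))⁻¹ • (ket0 - Complex.I • ket1)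

/-- `ρ₀ = ½|011⟩⟨011| + ½|100⟩⟨100|`. -/
def rho0 : Matrix (Fin 2 × Fin 2 × Fin 2) (Fin 2 × Fin 2 × Fin 2) ℂ :=
  (1 / 2 : ℂ) • outer (kron3 ket0 ket1 ket1) + (1 / 2 : ℂ) • outer (kron3 ket1 ket0 ket0)

/-- `ρ_τ = exp(−(iπ/4)H) ρ₀ exp((iπ/4)H)`. -/
def rhoTau : Matrix (Fin 2 × Fin 2 × Fin 2) (Fin 2 × Fin 2 × Fin 2) ℂ :=
  NormedSpace.exp ((-(Complex.I * ((Real.pi : ℂ) / 4))) • HH) * rho0 *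
    NormedSpace.exp ((Complex.I * ((Real.pi : ℂ) / 4)) • HH)

/-- `I₄ ⊗ P`: the operator acting as `P` on subsystem C and trivially on A, B. -/
def embedC (P : Matrix (Fin 2) (Fin 2) ℂ) :
    Matrix (Fin 2 × Fin 2 × Fin 2) (Fin 2 × Fin 2 × Fin 2) ℂ :=
  Id2 ⊗ₖ (Id2 ⊗ₖ P)

/-- The state after a von Neumann measurement `{P, I₂ − P}` on subsystem C:
`(I₄⊗P)ρ(I₄⊗P) + (I₄⊗(I₂−P))ρ(I₄⊗(I₂−P))`. -/
def measC (P : Matrix (Fin 2) (Fin 2) ℂ)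
    (ρ : Matrix (Fin 2 × Fin 2 × Fin 2) (Fin 2 × Fin 2 × Fin 2) ℂ) :
    Matrix (Fin 2 × Fin 2 × Fin 2) (Fin 2 × Fin 2 × Fin 2) ℂ :=
  embedC P * ρ * embedC P + embedC (Id2 - P) * ρ * embedC (Id2 - P)

abbrev F8 := Fin 2 × Fin 2 × Fin 2

def Kq : Matrix (Fin 2) (Fin 2) ℂ := !![1, 1; 1, -1]
def Zq : Matrix (Fin 2) (Fin 2) ℂ := !![1, 0; 0, -1]
def T8 : Matrix F8 F8 ℂ := Kq ⊗ₖ (Kq ⊗ₖ Kq)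
def sg : Fin 2 → ℂ := ![1, -1]
def dv : F8 → ℂ := fun p => sg p.1 * sg p.2.2 + sg p.2.1 * sg p.2.2

lemma Kq_mul_Kq : Kq * Kq = (2 : ℂ) • 1 := by
  ext i j
  fin_cases i <;> fin_cases j <;>
    norm_num [Kq, Matrix.mul_apply, Fin.sum_univ_two, Matrix.one_apply]

lemma T8_mul_T8 : T8 * T8 = (8 : ℂ) • (1 : Matrix F8 F8 ℂ) := by
  rw [T8, ← mul_kronecker_mul, ← mul_kronecker_mul, Kq_mul_Kq]
  rw [smul_kronecker, smul_kronecker, kronecker_smul, kronecker_smul, kronecker_smul,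
    one_kronecker_one, one_kronecker_one]
  rw [smul_smul, smul_smul]; norm_num

lemma T8_right_inv : T8 * ((8 : ℂ)⁻¹ • T8) = 1 := by
  rw [mul_smul_comm, T8_mul_T8, smul_smul]; norm_num

lemma Zq_diag : Zq = diagonal sg := by
  ext i j; fin_cases i <;> fin_cases j <;> simp [Zq, sg, diagonal]

lemma Id2_diag : Id2 = diagonal (fun _ : Fin 2 => (1 : ℂ)) := by
  simp [Id2, diagonal_one]

lemma diag_dv : diagonal dv = Zq ⊗ₖ (Id2 ⊗ₖ Zq) + Id2 ⊗ₖ (Zq ⊗ₖ Zq) := by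
  rw [Zq_diag, Id2_diag, diagonal_kronecker_diagonal, diagonal_kronecker_diagonal,
    diagonal_kronecker_diagonal, diagonal_kronecker_diagonal, diagonal_add]
  refine congrArg _ ?_
  funext p
  simp only [dv]
  ring

lemma X_mul_Kq : X * Kq = Kq * Zq := by
  ext i j
  fin_cases i <;> fin_cases j <;>
    norm_num [X, Kq, Zq, Matrix.mul_apply, Fin.sum_univ_two]

lemma HH_mul_T8 : HH * T8 = T8 * diagonal dv := by
  rw [HH, T8, diag_dv, add_mul, mul_add]
  simp only [← mul_kronecker_mul]
  simp [X_mul_Kq, Id2]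

lemma isUnit_T8 : IsUnit T8 := (Matrix.isUnit_iff_isUnit_det _).2 (Matrix.isUnit_det_of_right_inverse T8_right_inv)

lemma T8_inv : T8⁻¹ = (8 : ℂ)⁻¹ • T8 := Matrix.inv_eq_right_inv T8_right_inv

lemma exp_smul_HH (z : ℂ) :
    NormedSpace.exp (z • HH) =
      T8 * diagonal (fun p => Complex.exp (z * dv p)) * ((8 : ℂ)⁻¹ • T8) := by
  have hHH : HH = T8 * diagonal dv * T8⁻¹ := by
    rw [T8_inv]
    calc HH = HH * (T8 * ((8 : ℂ)⁻¹ • T8)) := by rw [T8_right_inv, mul_one]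
      _ = (HH * T8) * ((8 : ℂ)⁻¹ • T8) := by rw [mul_assoc]
      _ = T8 * diagonal dv * ((8 : ℂ)⁻¹ • T8) := by rw [HH_mul_T8]
  have hconj : z • HH = T8 * diagonal (fun p => z * dv p) * T8⁻¹ := by
    rw [hHH]
    have : diagonal (fun p => z * dv p) = z • diagonal dv := by
      rw [← diagonal_smul]; rfl
    rw [this, Matrix.mul_smul, Matrix.smul_mul]
  rw [hconj, Matrix.exp_conj T8 (diagonal fun p => z * dv p) isUnit_T8,
    Matrix.exp_diagonal, T8_inv]
  congr 2
  rw [Pi.exp_def]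
  funext p
  rw [← Complex.exp_eq_exp_ℂ]


lemma expA : Complex.exp (-(Complex.I * ((Real.pi : ℂ) / 4) * 2)) = -Complex.I := by
  have h : -(Complex.I * ((Real.pi : ℂ) / 4) * 2) = (-((Real.pi : ℂ) / 2)) * Complex.I := by ring
  rw [h, Complex.exp_mul_I, Complex.cos_neg, Complex.sin_neg, Complex.cos_pi_div_two,
    Complex.sin_pi_div_two]
  ring

lemma expC : Complex.exp (Complex.I * ((Real.pi : ℂ) / 4) * 2) = Complex.I := by
  have h : Complex.I * ((Real.pi : ℂ) / 4) * 2 = ((Real.pi : ℂ) / 2) * Complex.I := by ring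
  rw [h, Complex.exp_mul_I, Complex.cos_pi_div_two, Complex.sin_pi_div_two]
  ring

def Umat : Matrix F8 F8 ℂ :=
  (1/2 : ℂ) • ((1 : Matrix F8 F8 ℂ) - X ⊗ₖ (X ⊗ₖ Id2) - Complex.I • (X ⊗ₖ (Id2 ⊗ₖ X))
    - Complex.I • (Id2 ⊗ₖ (X ⊗ₖ X)))

def Vmat : Matrix F8 F8 ℂ :=
  (1/2 : ℂ) • ((1 : Matrix F8 F8 ℂ) - X ⊗ₖ (X ⊗ₖ Id2) + Complex.I • (X ⊗ₖ (Id2 ⊗ₖ X))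
    + Complex.I • (Id2 ⊗ₖ (X ⊗ₖ X)))

lemma hKZK : Kq * Zq * Kq = (2 : ℂ) • X := by
  ext i j
  fin_cases i <;> fin_cases j <;>
    norm_num [Kq, Zq, X, Matrix.mul_apply, Fin.sum_univ_two]

lemma hK1K : Kq * Id2 * Kq = (2 : ℂ) • Id2 := by
  have : Kq * Id2 = Kq := by rw [Id2, mul_one]
  rw [this, Kq_mul_Kq, Id2]

lemma conjT (P Q R : Matrix (Fin 2) (Fin 2) ℂ) :
    T8 * (P ⊗ₖ (Q ⊗ₖ R)) * T8
      = (Kq * P * Kq) ⊗ₖ ((Kq * Q * Kq) ⊗ₖ (Kq * R * Kq)) := by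
  rw [T8]
  simp only [← mul_kronecker_mul]


set_option maxHeartbeats 2000000 in
lemma diagE1 : diagonal (fun p : F8 => 1 - dv p ^ 2 / 4 - Complex.I * dv p / 2)
    = (1/2 : ℂ) • ((1 : Matrix F8 F8 ℂ) - Zq ⊗ₖ (Zq ⊗ₖ Id2) - Complex.I • (Zq ⊗ₖ (Id2 ⊗ₖ Zq))
        - Complex.I • (Id2 ⊗ₖ (Zq ⊗ₖ Zq))) := by
  ext p q
  obtain ⟨a, b, c⟩ := p; obtain ⟨a', b', c'⟩ := q
  fin_cases a <;> fin_cases b <;> fin_cases c <;> fin_cases a' <;> fin_cases b' <;> fin_cases c' <;>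
    simp [Matrix.diagonal_apply, dv, sg, Zq, Id2, Matrix.one_apply, kroneckerMap_apply,
      Prod.ext_iff, Fin.ext_iff] <;> first | ring1 | (ring_nf; norm_num [Complex.I_sq])

set_option maxHeartbeats 2000000 in
lemma diagE2 : diagonal (fun p : F8 => 1 - dv p ^ 2 / 4 + Complex.I * dv p / 2)
    = (1/2 : ℂ) • ((1 : Matrix F8 F8 ℂ) - Zq ⊗ₖ (Zq ⊗ₖ Id2) + Complex.I • (Zq ⊗ₖ (Id2 ⊗ₖ Zq))
        + Complex.I • (Id2 ⊗ₖ (Zq ⊗ₖ Zq))) := by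
  ext p q
  obtain ⟨a, b, c⟩ := p; obtain ⟨a', b', c'⟩ := q
  fin_cases a <;> fin_cases b <;> fin_cases c <;> fin_cases a' <;> fin_cases b' <;> fin_cases c' <;>
    simp [Matrix.diagonal_apply, dv, sg, Zq, Id2, Matrix.one_apply, kroneckerMap_apply,
      Prod.ext_iff, Fin.ext_iff] <;> first | ring1 | (ring_nf; norm_num [Complex.I_sq])

lemma t1 : T8 * (1 : Matrix F8 F8 ℂ) * T8 = (8:ℂ) • 1 := by
  rw [mul_one, T8_mul_T8]

lemma t2 : T8 * (Zq ⊗ₖ (Zq ⊗ₖ Id2)) * T8 = (8:ℂ) • (X ⊗ₖ (X ⊗ₖ Id2)) := by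
  rw [conjT, hKZK, hK1K]
  simp only [smul_kronecker, kronecker_smul, smul_smul]
  norm_num

lemma t3 : T8 * (Zq ⊗ₖ (Id2 ⊗ₖ Zq)) * T8 = (8:ℂ) • (X ⊗ₖ (Id2 ⊗ₖ X)) := by
  rw [conjT, hKZK, hK1K]
  simp only [smul_kronecker, kronecker_smul, smul_smul]
  norm_num

lemma t4 : T8 * (Id2 ⊗ₖ (Zq ⊗ₖ Zq)) * T8 = (8:ℂ) • (Id2 ⊗ₖ (X ⊗ₖ X)) := by
  rw [conjT, hKZK, hK1K]
  simp only [smul_kronecker, kronecker_smul, smul_smul]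
  norm_num

lemma exp_neg_eq_Umat :
    NormedSpace.exp ((-(Complex.I * ((Real.pi : ℂ) / 4))) • HH) = Umat := by
  rw [exp_smul_HH]
  have he : (fun p : F8 => Complex.exp ((-(Complex.I * ((Real.pi : ℂ) / 4))) * dv p))
      = fun p => 1 - dv p ^ 2 / 4 - Complex.I * dv p / 2 := by
    funext p
    obtain ⟨a, b, c⟩ := p
    fin_cases a <;> fin_cases b <;> fin_cases c <;>
      norm_num [dv, sg, expA, expC] <;> try ring
  rw [he, diagE1]
  simp only [mul_smul_comm, smul_mul_assoc, mul_sub, sub_mul, mul_add, add_mul, mul_one]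
  rw [T8_mul_T8, t2, t3, t4, Umat]
  module

lemma exp_pos_eq_Vmat :
    NormedSpace.exp ((Complex.I * ((Real.pi : ℂ) / 4)) • HH) = Vmat := by
  rw [exp_smul_HH]
  have he : (fun p : F8 => Complex.exp ((Complex.I * ((Real.pi : ℂ) / 4)) * dv p))
      = fun p => 1 - dv p ^ 2 / 4 + Complex.I * dv p / 2 := by
    funext p
    obtain ⟨a, b, c⟩ := p
    fin_cases a <;> fin_cases b <;> fin_cases c <;>
      norm_num [dv, sg, expA, expC] <;> try ring
  rw [he, diagE2]
  simp only [mul_smul_comm, smul_mul_assoc, mul_sub, sub_mul, mul_add, add_mul, mul_one]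
  rw [T8_mul_T8, t2, t3, t4, Vmat]
  module


lemma mul_vecMulVec_mul {n : Type*} [Fintype n] (M N : Matrix n n ℂ) (u w : n → ℂ) :
    M * vecMulVec u w * N = vecMulVec (M *ᵥ u) (w ᵥ* N) := by
  ext i j
  simp only [Matrix.mul_apply, vecMulVec_apply, Matrix.mulVec, Matrix.vecMul, dotProduct,
    Finset.sum_mul, Finset.mul_sum]
  refine Finset.sum_congr rfl fun k _ => Finset.sum_congr rfl fun l _ => by ring

lemma vecMulVec_smul_smul {n : Type*} (a b : ℂ) (u w : n → ℂ) :
    vecMulVec (a • u) (b • w) = (a * b) • vecMulVec u w := by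
  ext i j
  simp [vecMulVec_apply]
  ring

lemma zero_vmv {n : Type*} (w : n → ℂ) : vecMulVec (0 : n → ℂ) w = 0 := by
  ext i j
  simp [vecMulVec_apply]

def g1 : F8 → ℂ :=
  fun p => ![![![-Complex.I, 0], ![0, 1]], ![![0, -1], ![-Complex.I, 0]]] p.1 p.2.1 p.2.2

def g2 : F8 → ℂ :=
  fun p => ![![![0, -Complex.I], ![-1, 0]], ![![1, 0], ![0, -Complex.I]]] p.1 p.2.1 p.2.2

def yPp : Fin 2 → ℂ := ket0 + Complex.I • ket1

def jc1 : F8 → ℂ :=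
  fun p => ![![![1/2, Complex.I/2], ![1/2, Complex.I/2]],
             ![![-(1/2), -(Complex.I/2)], ![1/2, Complex.I/2]]] p.1 p.2.1 p.2.2

def jc2 : F8 → ℂ :=
  fun p => ![![![1/2, -(Complex.I/2)], ![-(1/2), Complex.I/2]],
             ![![1/2, -(Complex.I/2)], ![1/2, -(Complex.I/2)]]] p.1 p.2.1 p.2.2

set_option maxHeartbeats 1000000 in
lemma hUv1 : Umat *ᵥ kron3 ket0 ket1 ket1 = (1/2 : ℂ) • g1 := by
  funext p
  obtain ⟨a, b, c⟩ := p
  fin_cases a <;> fin_cases b <;> fin_cases c <;>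
    simp [Umat, Matrix.mulVec, dotProduct, Fintype.sum_prod_type, Fin.sum_univ_two,
      kron3, ket0, ket1, X, Id2, kroneckerMap_apply, Matrix.one_apply, g1,
      Prod.ext_iff, Fin.ext_iff] <;> first | ring1 | (ring_nf; norm_num [Complex.I_sq])

set_option maxHeartbeats 1000000 in
lemma hUv2 : Umat *ᵥ kron3 ket1 ket0 ket0 = (1/2 : ℂ) • g2 := by
  funext p
  obtain ⟨a, b, c⟩ := p
  fin_cases a <;> fin_cases b <;> fin_cases c <;>
    simp [Umat, Matrix.mulVec, dotProduct, Fintype.sum_prod_type, Fin.sum_univ_two,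
      kron3, ket0, ket1, X, Id2, kroneckerMap_apply, Matrix.one_apply, g2,
      Prod.ext_iff, Fin.ext_iff] <;> first | ring1 | (ring_nf; norm_num [Complex.I_sq])

set_option maxHeartbeats 1000000 in
lemma hv1V : star (kron3 ket0 ket1 ket1) ᵥ* Vmat = (1/2 : ℂ) • star g1 := by
  funext p
  obtain ⟨a, b, c⟩ := p
  simp only [Matrix.vecMul, dotProduct, Fintype.sum_prod_type, Fin.sum_univ_two]
  fin_cases a <;> fin_cases b <;> fin_cases c <;>
    simp [Vmat, Matrix.vecMul, dotProduct, Fintype.sum_prod_type, Fin.sum_univ_two,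
      kron3, ket0, ket1, X, Id2, kroneckerMap_apply, Matrix.one_apply, g1,
      Pi.star_apply, Complex.star_def, Prod.ext_iff, Fin.ext_iff] <;> first | ring1 | (ring_nf; norm_num [Complex.I_sq])

set_option maxHeartbeats 1000000 in
lemma hv2V : star (kron3 ket1 ket0 ket0) ᵥ* Vmat = (1/2 : ℂ) • star g2 := by
  funext p
  obtain ⟨a, b, c⟩ := p
  simp only [Matrix.vecMul, dotProduct, Fintype.sum_prod_type, Fin.sum_univ_two]
  fin_cases a <;> fin_cases b <;> fin_cases c <;>
    simp [Vmat, Matrix.vecMul, dotProduct, Fintype.sum_prod_type, Fin.sum_univ_two,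
      kron3, ket0, ket1, X, Id2, kroneckerMap_apply, Matrix.one_apply, g2,
      Pi.star_apply, Complex.star_def, Prod.ext_iff, Fin.ext_iff] <;> first | ring1 | (ring_nf; norm_num [Complex.I_sq])

lemma rhoTau_g : rhoTau = (1/8 : ℂ) • vecMulVec g1 (star g1) + (1/8 : ℂ) • vecMulVec g2 (star g2) := by
  rw [rhoTau, exp_neg_eq_Umat, exp_pos_eq_Vmat, rho0, outer, outer]
  simp only [mul_add, add_mul, mul_smul_comm, smul_mul_assoc]
  rw [mul_vecMulVec_mul, mul_vecMulVec_mul, hUv1, hUv2, hv1V, hv2V,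
    vecMulVec_smul_smul, vecMulVec_smul_smul]
  simp only [smul_smul]
  norm_num

set_option maxHeartbeats 2000000 in
lemma g_eq_j : (1/8 : ℂ) • vecMulVec g1 (star g1) + (1/8 : ℂ) • vecMulVec g2 (star g2)
    = (1/4 : ℂ) • vecMulVec jc1 (star jc1) + (1/4 : ℂ) • vecMulVec jc2 (star jc2) := by
  ext p q
  obtain ⟨a, b, c⟩ := p; obtain ⟨a', b', c'⟩ := q
  fin_cases a <;> fin_cases b <;> fin_cases c <;> fin_cases a' <;> fin_cases b' <;> fin_cases c' <;>
    simp [g1, g2, jc1, jc2, vecMulVec_apply, Pi.star_apply, Complex.star_def,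
      _root_.map_add, _root_.map_sub, _root_.map_mul, map_div₀, _root_.map_one, map_neg, map_ofNat,
      Complex.conj_I] <;> first | ring1 | (ring_nf; norm_num [Complex.I_sq])

lemma rhoTau_j : rhoTau = (1/4 : ℂ) • vecMulVec jc1 (star jc1) + (1/4 : ℂ) • vecMulVec jc2 (star jc2) :=
  rhoTau_g.trans g_eq_j

lemma sqrt2_fact : ((Real.sqrt 2 : ℂ))⁻¹ * star ((Real.sqrt 2 : ℂ))⁻¹ = 1/2 := by
  have hs : star ((Real.sqrt 2 : ℂ)) = (Real.sqrt 2 : ℂ) := by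
    simp [Complex.star_def, Complex.conj_ofReal]
  rw [star_inv₀, hs, ← mul_inv, ← Complex.ofReal_mul,
    Real.mul_self_sqrt (by norm_num : (0:ℝ) ≤ 2)]
  norm_num

lemma outer_invsqrt2_smul {n : Type*} (v : n → ℂ) :
    outer (((Real.sqrt 2 : ℂ))⁻¹ • v) = (1/2 : ℂ) • outer v := by
  rw [outer, outer, star_smul, vecMulVec_smul_smul, sqrt2_fact]

lemma part1 : rhoTau =
    (1 / 2 : ℂ) • outer (joinABC chiPlus yPlus) + (1 / 2 : ℂ) • outer (joinABC chiMinus yMinus) := by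
  have h1 : joinABC chiPlus yPlus = ((Real.sqrt 2 : ℂ))⁻¹ • jc1 := by
    funext p
    obtain ⟨a, b, c⟩ := p
    fin_cases a <;> fin_cases b <;> fin_cases c <;>
      simp [joinABC, chiPlus, kron2, ket0, ket1, yPlus, jc1] <;> first | ring1 | (ring_nf; norm_num [Complex.I_sq])
  have h2 : joinABC chiMinus yMinus = ((Real.sqrt 2 : ℂ))⁻¹ • jc2 := by
    funext p
    obtain ⟨a, b, c⟩ := p
    fin_cases a <;> fin_cases b <;> fin_cases c <;>
      simp [joinABC, chiMinus, kron2, ket0, ket1, yMinus, jc2] <;> first | ring1 | (ring_nf; norm_num [Complex.I_sq])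
  rw [rhoTau_j, h1, h2, outer_invsqrt2_smul, outer_invsqrt2_smul, smul_smul, smul_smul]
  norm_num [outer]

def Pp : Matrix (Fin 2) (Fin 2) ℂ := !![1, -Complex.I; Complex.I, 1]
def Pm : Matrix (Fin 2) (Fin 2) ℂ := !![1, Complex.I; -Complex.I, 1]
def Wp : Matrix F8 F8 ℂ := Id2 ⊗ₖ (Id2 ⊗ₖ Pp)
def Wm : Matrix F8 F8 ℂ := Id2 ⊗ₖ (Id2 ⊗ₖ Pm)

lemma outer_yPp : outer yPp = Pp := by
  ext i j
  fin_cases i <;> fin_cases j <;>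
    simp [outer, yPp, ket0, ket1, vecMulVec_apply, Pi.star_apply, Complex.star_def,
      _root_.map_add, _root_.map_mul, Complex.conj_I, Pp]

lemma outer_yPlus : outer yPlus = (1/2 : ℂ) • Pp := by
  have h : yPlus = ((Real.sqrt 2 : ℂ))⁻¹ • yPp := rfl
  rw [h, outer_invsqrt2_smul, outer_yPp]

lemma embedP : embedC (outer yPlus) = (1/2 : ℂ) • Wp := by
  rw [embedC, outer_yPlus, Wp]
  simp [kronecker_smul]

lemma hIdPp : Id2 - outer yPlus = (1/2 : ℂ) • Pm := by
  rw [outer_yPlus]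
  ext i j
  fin_cases i <;> fin_cases j <;> simp [Id2, Pp, Pm, Matrix.one_apply] <;> first | ring1 | (ring_nf; norm_num [Complex.I_sq])

lemma embedM : embedC (Id2 - outer yPlus) = (1/2 : ℂ) • Wm := by
  rw [embedC, hIdPp, Wm]
  simp [kronecker_smul]

lemma hWpj1 : Wp *ᵥ jc1 = (2 : ℂ) • jc1 := by
  funext p
  obtain ⟨a, b, c⟩ := p
  fin_cases a <;> fin_cases b <;> fin_cases c <;>
    simp [Wp, Pp, Id2, Matrix.mulVec, dotProduct, Fintype.sum_prod_type, Fin.sum_univ_two,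
      kroneckerMap_apply, Matrix.one_apply, jc1, Prod.ext_iff, Fin.ext_iff] <;> first | ring1 | (ring_nf; norm_num [Complex.I_sq])

lemma hWpj2 : Wp *ᵥ jc2 = 0 := by
  funext p
  obtain ⟨a, b, c⟩ := p
  fin_cases a <;> fin_cases b <;> fin_cases c <;>
    simp [Wp, Pp, Id2, Matrix.mulVec, dotProduct, Fintype.sum_prod_type, Fin.sum_univ_two,
      kroneckerMap_apply, Matrix.one_apply, jc2, Prod.ext_iff, Fin.ext_iff] <;> first | ring1 | (ring_nf; norm_num [Complex.I_sq])

lemma hWmj1 : Wm *ᵥ jc1 = 0 := by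
  funext p
  obtain ⟨a, b, c⟩ := p
  fin_cases a <;> fin_cases b <;> fin_cases c <;>
    simp [Wm, Pm, Id2, Matrix.mulVec, dotProduct, Fintype.sum_prod_type, Fin.sum_univ_two,
      kroneckerMap_apply, Matrix.one_apply, jc1, Prod.ext_iff, Fin.ext_iff] <;> first | ring1 | (ring_nf; norm_num [Complex.I_sq])

lemma hWmj2 : Wm *ᵥ jc2 = (2 : ℂ) • jc2 := by
  funext p
  obtain ⟨a, b, c⟩ := p
  fin_cases a <;> fin_cases b <;> fin_cases c <;>
    simp [Wm, Pm, Id2, Matrix.mulVec, dotProduct, Fintype.sum_prod_type, Fin.sum_univ_two,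
      kroneckerMap_apply, Matrix.one_apply, jc2, Prod.ext_iff, Fin.ext_iff] <;> first | ring1 | (ring_nf; norm_num [Complex.I_sq])

lemma hj1Wp : star jc1 ᵥ* Wp = (2 : ℂ) • star jc1 := by
  funext p
  obtain ⟨a, b, c⟩ := p
  simp only [Matrix.vecMul, dotProduct, Fintype.sum_prod_type, Fin.sum_univ_two]
  fin_cases a <;> fin_cases b <;> fin_cases c <;>
    simp [Wp, Pp, Id2, Matrix.vecMul, dotProduct, Fintype.sum_prod_type, Fin.sum_univ_two,
      kroneckerMap_apply, Matrix.one_apply, jc1, Pi.star_apply, Complex.star_def,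
      map_div₀, _root_.map_one, map_neg, map_ofNat, Complex.conj_I, Prod.ext_iff, Fin.ext_iff] <;> first | ring1 | (ring_nf; norm_num [Complex.I_sq])

lemma hj2Wm : star jc2 ᵥ* Wm = (2 : ℂ) • star jc2 := by
  funext p
  obtain ⟨a, b, c⟩ := p
  simp only [Matrix.vecMul, dotProduct, Fintype.sum_prod_type, Fin.sum_univ_two]
  fin_cases a <;> fin_cases b <;> fin_cases c <;>
    simp [Wm, Pm, Id2, Matrix.vecMul, dotProduct, Fintype.sum_prod_type, Fin.sum_univ_two,
      kroneckerMap_apply, Matrix.one_apply, jc2, Pi.star_apply, Complex.star_def,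
      map_div₀, _root_.map_one, map_neg, map_ofNat, Complex.conj_I, Prod.ext_iff, Fin.ext_iff] <;> first | ring1 | (ring_nf; norm_num [Complex.I_sq])

lemma part2 : measC (outer yPlus) rhoTau = rhoTau := by
  rw [measC, embedP, embedM, rhoTau_j]
  simp only [mul_add, add_mul, mul_smul_comm, smul_mul_assoc, smul_smul]
  simp only [mul_vecMulVec_mul, hWpj1, hWpj2, hWmj1, hWmj2, hj1Wp, hj2Wm, zero_vmv,
    vecMulVec_smul_smul, smul_zero, add_zero, zero_add, smul_smul]
  norm_num

theorem rhoTau_is_classical_on_C :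
    rhoTau =
      (1 / 2 : ℂ) • outer (joinABC chiPlus yPlus) +
        (1 / 2 : ℂ) • outer (joinABC chiMinus yMinus) ∧
    measC (outer yPlus) rhoTau = rhoTau := by
  exact ⟨part1, part2⟩

end
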